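/- Van der Corput's fundamental inequality: for complex numbers u_1,...,u_N and any integer 1 ≤ H ≤ N, |Σ_{n=1}^N u_n / N|² ≤ (N+H−1)/(N²H) · Σ_{n=1}^N |u_n|² + 2(N+H−1)/(N²H²) · Σ_{k=1}^{H−1}(H−k)·Re(Σ_{n=1}^{N−k} u_n · conj(u_{n+k})). -/

import Mathlib

open Finset

namespace VdCAux

noncomputable def V (N : ℕ) (u : ℕ → ℂ) : ℕ → ℂ :=
  fun n => if n ∈ Finset.Icc 1 N then u n else 0

lemma V_eq_zero {N : ℕ} {u : ℕ → ℂ} {n : ℕ} (h : n ∉ Finset.Icc 1 N) : V N u n = 0 := if_neg h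

lemma V_eq {N : ℕ} {u : ℕ → ℂ} {n : ℕ} (h : n ∈ Finset.Icc 1 N) : V N u n = u n := if_pos h

lemma reindex {M : Type*} [AddCommMonoid M] (N H : ℕ) {h : ℕ} (hh : h < H)
    (g : ℕ → M) (hg : ∀ j, j ∉ Finset.Icc 1 N → g j = 0) :
    ∑ m ∈ Finset.Icc 1 (N + H - 1), g (m + h + 1 - H) = ∑ n ∈ Finset.Icc 1 N, g n := by
  have hsub : Finset.Icc (H - h) (N + H - 1 - h) ⊆ Finset.Icc 1 (N + H - 1) :=
    Finset.Icc_subset_Icc (by omega) (by omega)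
  have hvan : ∀ m ∈ Finset.Icc 1 (N + H - 1), m ∉ Finset.Icc (H - h) (N + H - 1 - h) →
      g (m + h + 1 - H) = 0 := by
    intro m hm hm'
    apply hg
    simp only [Finset.mem_Icc] at *
    omega
  rw [← Finset.sum_subset hsub hvan]
  exact Finset.sum_nbij' (fun m => m + h + 1 - H) (fun n => n + H - 1 - h)
    (by intro a ha; simp only [Finset.mem_Icc] at *; omega)
    (by intro a ha; simp only [Finset.mem_Icc] at *; omega)
    (by intro a ha; simp only [Finset.mem_Icc] at *; omega)
    (by intro a ha; simp only [Finset.mem_Icc] at *; omega)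
    (by intro a ha; rfl)

lemma lt_part {M : Type*} [AddCommMonoid M] (H : ℕ) (g : ℕ → ℕ → M) :
    ∑ p ∈ (range H ×ˢ range H).filter (fun p => p.1 < p.2), g p.1 p.2 =
      ∑ k ∈ Icc 1 (H - 1), ∑ h ∈ range (H - k), g h (h + k) := by
  rw [Finset.sum_sigma' (Icc 1 (H - 1)) (fun k => range (H - k)) (fun k h => g h (h + k))]
  refine (Finset.sum_nbij' (fun p => (⟨p.2 - p.1, p.1⟩ : Σ _ : ℕ, ℕ))
    (fun a => ((a.2, a.2 + a.1) : ℕ × ℕ)) ?_ ?_ ?_ ?_ ?_)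
  · rintro ⟨a, b⟩ ha; simp only [Finset.mem_sigma, Finset.mem_filter, Finset.mem_product,
      Finset.mem_Icc, Finset.mem_range] at *; omega
  · rintro ⟨k, h⟩ ha; simp only [Finset.mem_sigma, Finset.mem_filter, Finset.mem_product,
      Finset.mem_Icc, Finset.mem_range] at *; omega
  · rintro ⟨a, b⟩ ha
    simp only [Finset.mem_filter, Finset.mem_product, Finset.mem_range] at ha
    simp only [Prod.mk.injEq]
    exact ⟨trivial, by omega⟩
  · rintro ⟨k, h⟩ ha; simp
  · rintro ⟨a, b⟩ ha
    simp only [Finset.mem_filter, Finset.mem_product, Finset.mem_range] at ha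
    show g a b = g a (a + (b - a))
    congr 1
    omega

lemma star_split {M : Type*} [AddCommMonoid M] (H : ℕ) (f : ℕ → ℕ → M) :
    ∑ h ∈ range H, ∑ h' ∈ range H, f h h' =
      ∑ h ∈ range H, f h h +
        ∑ k ∈ Icc 1 (H - 1), ∑ h ∈ range (H - k), (f h (h + k) + f (h + k) h) := by
  classical
  rw [← Finset.sum_product']
  rw [← Finset.sum_filter_add_sum_filter_not (range H ×ˢ range H) (fun p => p.1 = p.2)]
  congr 1
  · refine Finset.sum_nbij' (fun p => p.1) (fun h => ((h, h) : ℕ × ℕ)) ?_ ?_ ?_ ?_ ?_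
    · rintro ⟨a, b⟩ ha; simp only [Finset.mem_filter, Finset.mem_product, Finset.mem_range] at *
      omega
    · intro a ha
      simp only [Finset.mem_filter, Finset.mem_product]
      exact ⟨⟨ha, ha⟩, trivial⟩
    · rintro ⟨a, b⟩ ha; simp only [Finset.mem_filter] at ha
      simp only [Prod.mk.injEq]
      exact ⟨trivial, ha.2⟩
    · intro a ha; rfl
    · rintro ⟨a, b⟩ ha; simp only [Finset.mem_filter] at ha
      simp only [ha.2]
  · rw [← Finset.sum_filter_add_sum_filter_not ((range H ×ˢ range H).filter (fun p => ¬p.1 = p.2))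
      (fun p => p.1 < p.2)]
    have e1 : ((range H ×ˢ range H).filter (fun p => ¬p.1 = p.2)).filter (fun p => p.1 < p.2) =
        (range H ×ˢ range H).filter (fun p => p.1 < p.2) := by
      rw [Finset.filter_filter]
      exact Finset.filter_congr (by intro p _; constructor <;> intro h'
                                    · exact h'.2
                                    · exact ⟨Nat.ne_of_lt h', h'⟩)
    have e2 : ((range H ×ˢ range H).filter (fun p => ¬p.1 = p.2)).filter (fun p => ¬p.1 < p.2) =
        (range H ×ˢ range H).filter (fun p => p.2 < p.1) := by
      rw [Finset.filter_filter]
      refine Finset.filter_congr ?_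
      intro p _; constructor <;> intro h' <;> omega
    rw [e1, e2]
    have e3 : ∑ p ∈ (range H ×ˢ range H).filter (fun p => p.2 < p.1), f p.1 p.2 =
        ∑ p ∈ (range H ×ˢ range H).filter (fun p => p.1 < p.2), f p.2 p.1 := by
      refine Finset.sum_nbij' (fun p => ((p.2, p.1) : ℕ × ℕ)) (fun p => ((p.2, p.1) : ℕ × ℕ))
        ?_ ?_ ?_ ?_ ?_
      · rintro ⟨a, b⟩ ha; simp only [Finset.mem_filter, Finset.mem_product, Finset.mem_range] at *
        omega
      · rintro ⟨a, b⟩ ha; simp only [Finset.mem_filter, Finset.mem_product, Finset.mem_range] at *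
        omega
      · rintro ⟨a, b⟩ _; rfl
      · rintro ⟨a, b⟩ _; rfl
      · rintro ⟨a, b⟩ _; rfl
    rw [e3, lt_part H f, lt_part H (fun a b => f b a)]
    rw [← Finset.sum_add_distrib]
    exact Finset.sum_congr rfl (fun k _ => (Finset.sum_add_distrib).symm)

variable (N H : ℕ) (u : ℕ → ℂ)

lemma sum_A (hH : 1 ≤ H) :
    ∑ m ∈ Finset.Icc 1 (N + H - 1), ∑ h ∈ range H, V N u (m + h + 1 - H) =
      (H : ℂ) * ∑ n ∈ Finset.Icc 1 N, u n := by
  rw [Finset.sum_comm]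
  have : ∀ h ∈ range H, ∑ m ∈ Finset.Icc 1 (N + H - 1), V N u (m + h + 1 - H) =
      ∑ n ∈ Finset.Icc 1 N, u n := by
    intro h hh
    rw [reindex N H (Finset.mem_range.mp hh) (V N u) (fun j hj => V_eq_zero hj)]
    exact Finset.sum_congr rfl (fun n hn => V_eq hn)
  rw [Finset.sum_congr rfl this, Finset.sum_const, Finset.card_range, nsmul_eq_mul]

lemma diag_sum {h : ℕ} (hh : h < H) :
    ∑ m ∈ Finset.Icc 1 (N + H - 1),
        V N u (m + h + 1 - H) * (starRingEnd ℂ) (V N u (m + h + 1 - H)) =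
      ∑ n ∈ Finset.Icc 1 N, u n * (starRingEnd ℂ) (u n) := by
  rw [reindex N H hh (fun n => V N u n * (starRingEnd ℂ) (V N u n))
    (fun j hj => by show V N u j * (starRingEnd ℂ) (V N u j) = 0; rw [V_eq_zero hj]; simp)]
  exact Finset.sum_congr rfl (fun n hn => by rw [V_eq hn])

lemma off_sum {h k : ℕ} (hk1 : 1 ≤ k) (hkH : h + k < H) (hkN : k ≤ N) :
    ∑ m ∈ Finset.Icc 1 (N + H - 1),
        V N u (m + h + 1 - H) * (starRingEnd ℂ) (V N u (m + (h + k) + 1 - H)) =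
      ∑ n ∈ Finset.Icc 1 (N - k), u n * (starRingEnd ℂ) (u (n + k)) := by
  have step1 : ∀ m, V N u (m + h + 1 - H) * (starRingEnd ℂ) (V N u (m + (h + k) + 1 - H)) =
      (fun n => V N u n * (starRingEnd ℂ) (V N u (n + k))) (m + h + 1 - H) := by
    intro m
    by_cases hm : H ≤ m + h + 1
    · have e : m + (h + k) + 1 - H = (m + h + 1 - H) + k := by omega
      show _ = V N u (m + h + 1 - H) * (starRingEnd ℂ) (V N u ((m + h + 1 - H) + k))
      rw [e]
    · have h0 : m + h + 1 - H = 0 := by omega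
      rw [h0]
      simp only []
      rw [V_eq_zero (by simp)]
      simp
  rw [Finset.sum_congr rfl (fun m _ => step1 m)]
  rw [reindex N H (show h < H by omega) (fun n => V N u n * (starRingEnd ℂ) (V N u (n + k)))
    (fun j hj => by show V N u j * (starRingEnd ℂ) (V N u (j + k)) = 0; rw [V_eq_zero hj]; simp)]
  rw [← Finset.sum_subset (Finset.Icc_subset_Icc le_rfl (by omega) :
      Finset.Icc 1 (N - k) ⊆ Finset.Icc 1 N) ?_]
  · refine Finset.sum_congr rfl (fun n hn => ?_)
    simp only [Finset.mem_Icc] at hn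
    rw [V_eq (by simp only [Finset.mem_Icc]; omega), V_eq (by simp only [Finset.mem_Icc]; omega)]
  · intro n hn hn'
    simp only [Finset.mem_Icc] at hn hn'
    rw [V_eq_zero (n := n + k) (by simp only [Finset.mem_Icc]; omega)]
    simp

end VdCAux

open Finset

/-- Van der Corput's fundamental inequality: for complex `u 1, ..., u N` and any integer
`1 ≤ H ≤ N`,
`|∑_{n=1}^N u n / N|² ≤ (N+H-1)/(N²H) ∑ |u n|²
  + 2(N+H-1)/(N²H²) ∑_{k=1}^{H-1} (H-k) Re ∑_{n=1}^{N-k} u n conj (u (n+k))`. -/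
theorem van_der_corput_fundamental (N H : ℕ) (hH : 1 ≤ H) (hHN : H ≤ N) (u : ℕ → ℂ) :
    (‖∑ n ∈ Finset.Icc 1 N, u n‖ / N) ^ 2 ≤
      ((N : ℝ) + H - 1) / ((N : ℝ) ^ 2 * H) *
          ∑ n ∈ Finset.Icc 1 N, ‖u n‖ ^ 2 +
        2 * ((N : ℝ) + H - 1) / ((N : ℝ) ^ 2 * H ^ 2) *
          ∑ k ∈ Finset.Icc 1 (H - 1), ((H : ℝ) - k) *
            (∑ n ∈ Finset.Icc 1 (N - k), u n * (starRingEnd ℂ) (u (n + k))).re := by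
  classical
  set T := ‖∑ n ∈ Finset.Icc 1 N, u n‖ with hTdef
  set A := ∑ n ∈ Finset.Icc 1 N, (‖u n‖) ^ 2 with hAdef
  set B := ∑ k ∈ Finset.Icc 1 (H - 1), ((H : ℝ) - k) *
      (∑ n ∈ Finset.Icc 1 (N - k), u n * (starRingEnd ℂ) (u (n + k))).re with hBdef
  have hA : ∑ m ∈ Finset.Icc 1 (N + H - 1), ∑ h ∈ Finset.range H, VdCAux.V N u (m + h + 1 - H) =
      (H : ℂ) * ∑ n ∈ Finset.Icc 1 N, u n := VdCAux.sum_A N H u hH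
  have hQ : ∑ m ∈ Finset.Icc 1 (N + H - 1),
      (‖∑ h ∈ Finset.range H, VdCAux.V N u (m + h + 1 - H)‖) ^ 2 =
      (H : ℝ) * A + 2 * B := by
    have e1 : ∀ m : ℕ, (‖∑ h ∈ Finset.range H, VdCAux.V N u (m + h + 1 - H)‖) ^ 2 =
        (∑ h ∈ Finset.range H, ∑ h' ∈ Finset.range H,
          VdCAux.V N u (m + h + 1 - H) * (starRingEnd ℂ) (VdCAux.V N u (m + h' + 1 - H))).re := by
      intro m
      rw [← Finset.sum_mul_sum, ← map_sum, Complex.mul_conj]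
      simp [Complex.sq_norm]
    rw [Finset.sum_congr rfl (fun m _ => e1 m), ← Complex.re_sum]
    rw [Finset.sum_comm]
    rw [Finset.sum_congr rfl (fun h (_ : h ∈ Finset.range H) => Finset.sum_comm)]
    rw [VdCAux.star_split H (fun h h' => ∑ m ∈ Finset.Icc 1 (N + H - 1),
      VdCAux.V N u (m + h + 1 - H) * (starRingEnd ℂ) (VdCAux.V N u (m + h' + 1 - H)))]
    rw [Complex.add_re]
    congr 1
    · -- diagonal
      rw [Finset.sum_congr rfl (fun h hh => VdCAux.diag_sum N H u (Finset.mem_range.mp hh))]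
      rw [Finset.sum_const, Finset.card_range, nsmul_eq_mul, Complex.mul_re]
      simp only [Complex.natCast_re, Complex.natCast_im, zero_mul, sub_zero]
      congr 1
      rw [Complex.re_sum, hAdef]
      refine Finset.sum_congr rfl (fun n _ => ?_)
      rw [Complex.mul_conj]
      simp [Complex.sq_norm]
    · -- off-diagonal
      rw [Complex.re_sum, hBdef, Finset.mul_sum]
      refine Finset.sum_congr rfl (fun k hk => ?_)
      simp only [Finset.mem_Icc] at hk
      have hcast : ((H : ℝ) - (k : ℝ)) = ((H - k : ℕ) : ℝ) := by
        rw [Nat.cast_sub (by omega)]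
      have hterm : ∀ h ∈ Finset.range (H - k),
          ((∑ m ∈ Finset.Icc 1 (N + H - 1),
              VdCAux.V N u (m + h + 1 - H) * (starRingEnd ℂ) (VdCAux.V N u (m + (h + k) + 1 - H))) +
            ∑ m ∈ Finset.Icc 1 (N + H - 1),
              VdCAux.V N u (m + (h + k) + 1 - H) * (starRingEnd ℂ) (VdCAux.V N u (m + h + 1 - H))).re
          = 2 * (∑ n ∈ Finset.Icc 1 (N - k), u n * (starRingEnd ℂ) (u (n + k))).re := by
        intro h hh
        simp only [Finset.mem_range] at hh
        have h1 : 1 ≤ k := hk.1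
        have h2 : h + k < H := by omega
        have h3 : k ≤ N := by omega
        have hoff := VdCAux.off_sum N H u h1 h2 h3
        have hconj : ∑ m ∈ Finset.Icc 1 (N + H - 1),
            VdCAux.V N u (m + (h + k) + 1 - H) * (starRingEnd ℂ) (VdCAux.V N u (m + h + 1 - H)) =
            (starRingEnd ℂ) (∑ m ∈ Finset.Icc 1 (N + H - 1),
              VdCAux.V N u (m + h + 1 - H) * (starRingEnd ℂ) (VdCAux.V N u (m + (h + k) + 1 - H))) := by
          rw [map_sum]
          refine Finset.sum_congr rfl (fun m _ => ?_)
          rw [map_mul, Complex.conj_conj]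
          ring
        rw [hconj, hoff, Complex.add_conj]
        simp
      rw [Complex.re_sum, Finset.sum_congr rfl hterm, Finset.sum_const, Finset.card_range,
        nsmul_eq_mul, hcast]
      ring
  -- Cauchy-Schwarz
  have hcard : (((Finset.Icc 1 (N + H - 1)).card : ℝ)) = (N : ℝ) + (H : ℝ) - 1 := by
    rw [Nat.card_Icc]
    have : N + H - 1 + 1 - 1 = N + H - 1 := by omega
    rw [this, Nat.cast_sub (by omega : 1 ≤ N + H)]
    push_cast
    ring
  have habs : (H : ℝ) * T = ‖∑ m ∈ Finset.Icc 1 (N + H - 1),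
      ∑ h ∈ Finset.range H, VdCAux.V N u (m + h + 1 - H)‖ := by
    rw [hA, norm_mul, Complex.norm_natCast, hTdef]
  have key : ((H : ℝ) * T) ^ 2 ≤ ((N : ℝ) + (H : ℝ) - 1) * ((H : ℝ) * A + 2 * B) := by
    rw [habs]
    calc (‖∑ m ∈ Finset.Icc 1 (N + H - 1),
          ∑ h ∈ Finset.range H, VdCAux.V N u (m + h + 1 - H)‖) ^ 2
        ≤ (∑ m ∈ Finset.Icc 1 (N + H - 1),
            ‖∑ h ∈ Finset.range H, VdCAux.V N u (m + h + 1 - H)‖) ^ 2 := by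
          apply pow_le_pow_left₀ (norm_nonneg _)
          exact norm_sum_le _ _
      _ ≤ ((Finset.Icc 1 (N + H - 1)).card : ℝ) * ∑ m ∈ Finset.Icc 1 (N + H - 1),
            (‖∑ h ∈ Finset.range H, VdCAux.V N u (m + h + 1 - H)‖) ^ 2 :=
          sq_sum_le_card_mul_sum_sq
      _ = ((N : ℝ) + (H : ℝ) - 1) * ((H : ℝ) * A + 2 * B) := by rw [hcard, hQ]
  have hN0 : (0 : ℝ) < N := by exact_mod_cast Nat.pos_of_ne_zero (by omega)
  have hH0 : (0 : ℝ) < H := by exact_mod_cast hH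
  rw [div_pow]
  have lhs_eq : T ^ 2 / (N : ℝ) ^ 2 = ((H : ℝ) * T) ^ 2 / ((N : ℝ) ^ 2 * (H : ℝ) ^ 2) := by
    field_simp
  have rhs_eq : ((N : ℝ) + H - 1) / ((N : ℝ) ^ 2 * H) * A
        + 2 * ((N : ℝ) + H - 1) / ((N : ℝ) ^ 2 * H ^ 2) * B
      = (((N : ℝ) + (H : ℝ) - 1) * ((H : ℝ) * A + 2 * B)) / ((N : ℝ) ^ 2 * (H : ℝ) ^ 2) := by
    field_simp
  rw [lhs_eq, rhs_eq]
  exact div_le_div_of_nonneg_right key (by positivity)
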